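/- Let (η_m) be a real sequence. Then Σ_m 3^m (3 η_{m+2} - 16 η_{m+1} + 5 η_m)^2 < ∞ if and only if there exist a constant A and a sequence (η'_m) with η_m = 5^m A + η'_m and Σ_m 3^m (η'_m)^2 < ∞. Moreover there are constants C_1, C_2 with Σ_m 3^m (η'_m)^2 ≤ C_1 (η_2 - 5 η_1)^2 + C_2 Σ_m 3^m (3 η_{m+2} - 16 η_{m+1} + 5 η_m)^2. -/

import Mathlib

open Finset

/-- Cauchy–Schwarz for tsum with nonnegative weights. -/
lemma my_tsum_cs (a x : ℕ → ℝ) (ha : ∀ j, 0 ≤ a j) (h1 : Summable a)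
    (h2 : Summable fun j => a j * x j ^ 2) :
    Summable (fun j => a j * x j) ∧
    (∑' j, a j * x j) ^ 2 ≤ (∑' j, a j) * ∑' j, a j * x j ^ 2 := by
  have hx : Summable (fun j => a j * x j) := by
    refine Summable.of_norm_bounded ((h1.add h2).div_const 2) ?_
    intro j
    simp only [Real.norm_eq_abs, abs_mul, abs_of_nonneg (ha j), Pi.add_apply]
    have h0 : |x j| ≤ (1 + x j ^ 2) / 2 := by nlinarith [sq_nonneg (|x j| - 1), sq_abs (x j)]
    calc a j * |x j| ≤ a j * ((1 + x j ^ 2) / 2) :=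
          mul_le_mul_of_nonneg_left h0 (ha j)
      _ = (a j + a j * x j ^ 2) / 2 := by ring
  refine ⟨hx, ?_⟩
  have key : ∀ n : ℕ, (∑ j ∈ range n, a j * x j) ^ 2 ≤
      (∑' j, a j) * ∑' j, a j * x j ^ 2 := by
    intro n
    have hcs := Finset.sum_mul_sq_le_sq_mul_sq (range n)
      (fun j => Real.sqrt (a j)) (fun j => Real.sqrt (a j) * x j)
    have e1 : ∀ j, Real.sqrt (a j) * (Real.sqrt (a j) * x j) = a j * x j := by
      intro j; rw [← mul_assoc, Real.mul_self_sqrt (ha j)]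
    have e2 : ∀ j, Real.sqrt (a j) ^ 2 = a j := fun j => Real.sq_sqrt (ha j)
    have e3 : ∀ j, (Real.sqrt (a j) * x j) ^ 2 = a j * x j ^ 2 := by
      intro j; rw [mul_pow, e2]
    simp only [e1, e2, e3] at hcs
    refine hcs.trans (mul_le_mul ?_ ?_ ?_ ?_)
    · exact Summable.sum_le_tsum _ (fun j _ => ha j) h1
    · exact Summable.sum_le_tsum _ (fun j _ => mul_nonneg (ha j) (sq_nonneg _)) h2
    · exact Finset.sum_nonneg fun j _ => mul_nonneg (ha j) (sq_nonneg _)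
    · exact tsum_nonneg fun j => ha j
  have htend : Filter.Tendsto (fun n => (∑ j ∈ range n, a j * x j) ^ 2)
      Filter.atTop (nhds ((∑' j, a j * x j) ^ 2)) :=
    (hx.hasSum.tendsto_sum_nat).pow 2
  exact le_of_tendsto htend (Filter.Eventually.of_forall key)


lemma my_key (η : ℕ → ℝ)
    (hS : Summable (fun m : ℕ =>
      (3:ℝ)^(m+1) * (3 * η (m+3) - 16 * η (m+2) + 5 * η (m+1))^2)) :
    ∃ (A : ℝ) (η' : ℕ → ℝ),
      (∀ m : ℕ, 1 ≤ m → η m = (5:ℝ)^m * A + η' m) ∧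
      Summable (fun m : ℕ => (3:ℝ)^(m+1) * (η' (m+1))^2) ∧
      (∑' m : ℕ, (3:ℝ)^(m+1) * (η' (m+1))^2) ≤
        9 * (η 2 - 5 * η 1)^2 +
        2 * ∑' m : ℕ, (3:ℝ)^(m+1) * (3 * η (m+3) - 16 * η (m+2) + 5 * η (m+1))^2 := by
  set u : ℕ → ℝ := fun k => η (k+1) - 5 * η k with hu
  set e : ℕ → ℝ := fun m => (3:ℝ)^(m+1) * (3 * η (m+3) - 16 * η (m+2) + 5 * η (m+1))^2 with he
  set v : ℕ → ℝ := fun m => (3:ℝ)^(m+1) * (u (m+1))^2 with hv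
  have hv0 : ∀ m, 0 ≤ v m := fun m => mul_nonneg (by positivity) (sq_nonneg _)
  have he0 : ∀ m, 0 ≤ e m := fun m => mul_nonneg (by positivity) (sq_nonneg _)
  set E : ℝ := ∑' m, e m with hE
  have hE0 : 0 ≤ E := tsum_nonneg he0
  -- recurrence: u (m+2) = (u (m+1) + ε (m+1))/3 where ε(m+1) = 3η(m+3)-16η(m+2)+5η(m+1)
  have hrecu : ∀ m : ℕ, u (m+2) = (u (m+1) + (3 * η (m+3) - 16 * η (m+2) + 5 * η (m+1)))/3 := by
    intro m; simp only [hu]; ring_nf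
  -- step bound for v
  have hvstep : ∀ m, v (m+1) ≤ (2/3) * v m + (2/3) * e m := by
    intro m
    have h1 : v (m+1) = (3:ℝ)^m * (u (m+1) + (3 * η (m+3) - 16 * η (m+2) + 5 * η (m+1)))^2 := by
      rw [hv]; simp only [hrecu m]
      have : (3:ℝ)^(m+1+1) = (3:ℝ)^m * 9 := by ring
      rw [this]; ring
    have hvm : v m = (3:ℝ)^m * 3 * (u (m+1))^2 := by rw [hv]; ring_nf
    have hem : e m = (3:ℝ)^m * 3 * (3 * η (m+3) - 16 * η (m+2) + 5 * η (m+1))^2 := by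
      rw [he]; ring_nf
    rw [h1, hvm, hem]
    have h3 : (0:ℝ) < (3:ℝ)^m := by positivity
    generalize (u (m+1)) = a
    generalize (3 * η (m+3) - 16 * η (m+2) + 5 * η (m+1)) = b
    generalize hp : ((3:ℝ)^m) = p at h3 ⊢
    nlinarith [mul_nonneg h3.le (sq_nonneg (a - b))]
  -- partial sums of v bounded
  have hVbound : ∀ n, ∑ m ∈ range n, v m ≤ 3 * v 0 + 2 * E := by
    intro n
    induction n with
    | zero => simp; positivity
    | succ n ih =>
      have h1 : ∑ m ∈ range (n+1), v m = (∑ m ∈ range n, v (m+1)) + v 0 :=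
        Finset.sum_range_succ' v n
      have h2 : ∑ m ∈ range n, v (m+1) ≤ (2/3) * ∑ m ∈ range n, v m + (2/3) * ∑ m ∈ range n, e m :=
        by
          calc ∑ m ∈ range n, v (m+1) ≤ ∑ m ∈ range n, ((2/3) * v m + (2/3) * e m) :=
                Finset.sum_le_sum fun m _ => hvstep m
            _ = (2/3) * ∑ m ∈ range n, v m + (2/3) * ∑ m ∈ range n, e m := by
                rw [Finset.sum_add_distrib, Finset.mul_sum, Finset.mul_sum]
      have h3 : ∑ m ∈ range n, e m ≤ E := Summable.sum_le_tsum _ (fun m _ => he0 m) hS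
      have h4 : ∑ m ∈ range n, v m ≤ ∑ m ∈ range (n+1), v m :=
        Finset.sum_le_sum_of_subset_of_nonneg (Finset.range_subset_range.2 (Nat.le_succ n))
          (fun m _ _ => hv0 m)
      linarith
  have hVsummable : Summable v := summable_of_sum_range_le hv0 hVbound
  set S : ℝ := ∑' m, v m with hSdef
  have hS0 : 0 ≤ S := tsum_nonneg hv0
  have hSle : S ≤ 3 * v 0 + 2 * E := Summable.tsum_le_of_sum_range_le hVsummable hVbound
  -- pointwise bound: 3^(k+1) u(k+1)^2 ≤ S
  have hterm : ∀ k, (3:ℝ)^(k+1) * (u (k+1))^2 ≤ S :=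
    fun k => Summable.le_tsum hVsummable k (fun j _ => hv0 j)
  have huS : ∀ k, 1 ≤ k → (u k)^2 ≤ S * (1/3:ℝ)^k := by
    intro k hk
    obtain ⟨j, rfl⟩ := Nat.exists_eq_add_of_le hk
    have h2 : (0:ℝ) < (3:ℝ)^(j+1) := by positivity
    have h3 : S * ((1/3:ℝ))^(1+j) = S / (3:ℝ)^(j+1) := by
      rw [one_div, inv_pow, add_comm 1 j, div_eq_mul_inv]
    rw [h3, le_div_iff₀ h2]
    have h4 : u (1+j) = u (j+1) := by rw [add_comm]
    rw [h4, mul_comm]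
    exact hterm j
  have huSw : ∀ k, 1 ≤ k → (u k)^2 ≤ S := by
    intro k hk
    refine (huS k hk).trans ?_
    have h1 : ((1/3:ℝ))^k ≤ 1 := pow_le_one₀ (by norm_num) (by norm_num)
    nlinarith
  -- the weight sequence
  set c : ℕ → ℝ := fun j => (1/5:ℝ)^(j+1) with hc
  have hc0 : ∀ j, 0 ≤ c j := fun j => by positivity
  have hcfun : c = fun j => (1/5:ℝ)^j * (1/5) := by
    funext j; show (1/5:ℝ)^(j+1) = (1/5:ℝ)^j * (1/5); ring
  have hcs : Summable c := by
    rw [hcfun]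
    exact (summable_geometric_of_lt_one (by norm_num) (by norm_num)).mul_right _
  have hcsum : ∑' j, c j = 1/4 := by
    rw [hcfun, tsum_mul_right, tsum_geometric_of_lt_one (by norm_num) (by norm_num)]
    norm_num
  -- summability of the series defining η'
  have hgs : ∀ m, 1 ≤ m → Summable (fun j => c j * u (m+j)) := by
    intro m hm
    set M : ℝ := (1 + S)/2 with hM
    refine Summable.of_norm_bounded (g := fun j => (1/5:ℝ)^j * ((1/5) * M)) ?_ ?_
    · exact (summable_geometric_of_lt_one (by norm_num) (by norm_num)).mul_right _
    · intro j
      have h1 : (u (m+j))^2 ≤ S := huSw (m+j) (le_trans hm (Nat.le_add_right m j))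
      have h2 : |u (m+j)| ≤ M := by
        rw [hM]
        nlinarith [sq_nonneg (|u (m+j)| - 1), sq_abs (u (m+j)), abs_nonneg (u (m+j))]
      have h3 : (0:ℝ) ≤ (1/5:ℝ)^(j+1) := by positivity
      calc ‖c j * u (m+j)‖ = (1/5:ℝ)^(j+1) * |u (m+j)| := by
            rw [Real.norm_eq_abs, abs_mul, hc, abs_of_nonneg h3]
        _ ≤ (1/5:ℝ)^(j+1) * M := mul_le_mul_of_nonneg_left h2 h3
        _ = (1/5:ℝ)^j * ((1/5) * M) := by rw [pow_succ]; ring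
  -- η' defined by the tail series
  set η' : ℕ → ℝ := fun m => -∑' j, c j * u (m+j) with hη'
  -- recurrence
  have hrec : ∀ m, 1 ≤ m → η' (m+1) = 5 * η' m + u m := by
    intro m hm
    have h1 := Summable.tsum_eq_zero_add (hgs m hm)
    have h2 : (fun j => c (j+1) * u (m + (j+1))) = fun j => (1/5) * (c j * u ((m+1)+j)) := by
      funext j
      have he' : m + (j+1) = (m+1)+j := by omega
      rw [he']
      show (1/5:ℝ)^(j+1+1) * u (m+1+j) = 1/5 * ((1/5:ℝ)^(j+1) * u (m+1+j))
      ring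
    rw [h2, tsum_mul_left] at h1
    have h3 : c 0 * u (m + 0) = (1/5) * u m := by
      show (1/5:ℝ)^(0+1) * u (m+0) = (1/5) * u m
      norm_num
    rw [h3] at h1
    have h4 : η' m = -((1/5) * u m + 1/5 * ∑' j, c j * u (m+1+j)) := by
      rw [hη']; rw [← h1]
    have h5 : η' (m+1) = -∑' j, c j * u (m+1+j) := rfl
    rw [h5, h4]; ring
  -- the constant A and the decomposition
  set A : ℝ := (η 1 - η' 1)/5 with hA
  have heq : ∀ m, 1 ≤ m → η m = (5:ℝ)^m * A + η' m := by
    intro m hm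
    induction m, hm using Nat.le_induction with
    | base => rw [hA]; ring
    | succ m hm ih =>
      have h1 : η (m+1) = 5 * η m + u m := by simp only [hu]; ring
      rw [h1, ih, hrec m hm, pow_succ]
      ring
  -- summability of the squared tail series, with bound
  have hgs2 : ∀ m, 1 ≤ m → Summable (fun j => c j * (u (m+j))^2) := by
    intro m hm
    refine Summable.of_nonneg_of_le (fun j => mul_nonneg (hc0 j) (sq_nonneg _))
      (fun j => ?_)
      (((summable_geometric_of_lt_one (by norm_num) (by norm_num) :
        Summable fun j : ℕ => (1/15:ℝ)^j)).mul_left (S * (1/5) * (1/3:ℝ)^m))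
    have h1 : (u (m+j))^2 ≤ S * (1/3:ℝ)^(m+j) := huS (m+j) (hm.trans (Nat.le_add_right m j))
    have h2 := mul_le_mul_of_nonneg_left h1 (hc0 j)
    refine h2.trans_eq ?_
    show (1/5:ℝ)^(j+1) * (S * (1/3:ℝ)^(m+j)) = S * (1/5) * (1/3:ℝ)^m * (1/15:ℝ)^j
    rw [pow_add]
    have h3 : (1/15:ℝ)^j = (1/5:ℝ)^j * (1/3:ℝ)^j := by rw [← mul_pow]; norm_num
    rw [h3]; ring
  have hkey : ∀ m j, 1 ≤ m → c j * (u (m+j))^2 ≤ (S * (1/5) * (1/3:ℝ)^m) * (1/15:ℝ)^j := by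
    intro m j hm
    have h1 : (u (m+j))^2 ≤ S * (1/3:ℝ)^(m+j) := huS (m+j) (hm.trans (Nat.le_add_right m j))
    have h2 := mul_le_mul_of_nonneg_left h1 (hc0 j)
    refine h2.trans_eq ?_
    show (1/5:ℝ)^(j+1) * (S * (1/3:ℝ)^(m+j)) = (S * (1/5) * (1/3:ℝ)^m) * (1/15:ℝ)^j
    rw [pow_add]
    have h3 : (1/15:ℝ)^j = (1/5:ℝ)^j * (1/3:ℝ)^j := by rw [← mul_pow]; norm_num
    rw [h3]; ring
  -- pointwise bound on η'
  have hbd : ∀ m, 1 ≤ m → (3:ℝ)^m * (η' m)^2 ≤ S / 16 := by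
    intro m hm
    obtain ⟨hx, hcs2⟩ := my_tsum_cs c (fun j => u (m+j)) hc0 hcs (hgs2 m hm)
    have hT : ∑' j, c j * (u (m+j))^2 ≤ S * (1/5) * (1/3:ℝ)^m * (15/14) := by
      have h1 := Summable.tsum_le_tsum (fun j => hkey m j hm) (hgs2 m hm)
        (((summable_geometric_of_lt_one (by norm_num) (by norm_num) :
          Summable fun j : ℕ => (1/15:ℝ)^j)).mul_left (S * (1/5) * (1/3:ℝ)^m))
      rw [tsum_mul_left, tsum_geometric_of_lt_one (by norm_num) (by norm_num)] at h1
      refine h1.trans_eq ?_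
      norm_num
    have hT0 : (0:ℝ) ≤ ∑' j, c j * (u (m+j))^2 :=
      tsum_nonneg (fun j => mul_nonneg (hc0 j) (sq_nonneg _))
    have hsq : (η' m)^2 = (∑' j, c j * u (m+j))^2 := by
      have hr : η' m = -∑' j, c j * u (m+j) := rfl
      rw [hr, neg_sq]
    have h4 : (η' m)^2 ≤ (1/4) * (S * (1/5) * (1/3:ℝ)^m * (15/14)) := by
      rw [hsq]
      calc (∑' j, c j * u (m+j))^2 ≤ (∑' j, c j) * ∑' j, c j * (u (m+j))^2 := hcs2
        _ ≤ (∑' j, c j) * (S * (1/5) * (1/3:ℝ)^m * (15/14)) := by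
            refine mul_le_mul_of_nonneg_left hT ?_
            exact tsum_nonneg hc0
        _ = (1/4) * (S * (1/5) * (1/3:ℝ)^m * (15/14)) := by rw [hcsum]
    have h5 : (0:ℝ) < (3:ℝ)^m := by positivity
    have h6 : (3:ℝ)^m * (1/3:ℝ)^m = 1 := by
      rw [← mul_pow]; norm_num
    calc (3:ℝ)^m * (η' m)^2 ≤ (3:ℝ)^m * ((1/4) * (S * (1/5) * (1/3:ℝ)^m * (15/14))) :=
          mul_le_mul_of_nonneg_left h4 h5.le
      _ = ((3:ℝ)^m * (1/3:ℝ)^m) * (S * (3/56)) := by ring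
      _ = S * (3/56) := by rw [h6, one_mul]
      _ ≤ S / 16 := by linarith
  -- the target series
  set t : ℕ → ℝ := fun m => (3:ℝ)^(m+1) * (η' (m+1))^2 with ht
  have ht0 : ∀ m, 0 ≤ t m := fun m => mul_nonneg (by positivity) (sq_nonneg _)
  have htstep : ∀ m, t m ≤ (2/75) * t (m+1) + (2/25) * v m := by
    intro m
    have hr : η' (m+2) = 5 * η' (m+1) + u (m+1) := hrec (m+1) (Nat.le_add_left 1 m)
    have h2 : t m = (3:ℝ)^(m+1) * ((η' (m+2) - u (m+1))/5)^2 := by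
      show (3:ℝ)^(m+1) * (η' (m+1))^2 = _
      rw [hr]; ring
    have h3 : t (m+1) = (3:ℝ)^(m+1) * 3 * (η' (m+2))^2 := by
      show (3:ℝ)^(m+2) * (η' (m+2))^2 = _
      ring
    have h4 : v m = (3:ℝ)^(m+1) * (u (m+1))^2 := rfl
    rw [h2, h3, h4]
    have hp : (0:ℝ) < (3:ℝ)^(m+1) := by positivity
    generalize η' (m+2) = a
    generalize u (m+1) = b
    generalize hpp : ((3:ℝ)^(m+1)) = p at hp ⊢
    nlinarith [mul_nonneg hp.le (sq_nonneg (a + b))]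
  have hPbound : ∀ n, ∑ m ∈ range n, t m ≤ S := by
    intro n
    have h1 : ∑ m ∈ range n, t m ≤
        (2/75) * ∑ m ∈ range n, t (m+1) + (2/25) * ∑ m ∈ range n, v m := by
      calc ∑ m ∈ range n, t m ≤ ∑ m ∈ range n, ((2/75) * t (m+1) + (2/25) * v m) :=
            Finset.sum_le_sum fun m _ => htstep m
        _ = (2/75) * ∑ m ∈ range n, t (m+1) + (2/25) * ∑ m ∈ range n, v m := by
            rw [Finset.sum_add_distrib, Finset.mul_sum, Finset.mul_sum]
    have e1 : ∑ m ∈ range (n+1), t m = (∑ m ∈ range n, t (m+1)) + t 0 :=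
      Finset.sum_range_succ' t n
    have e2 : ∑ m ∈ range (n+1), t m = (∑ m ∈ range n, t m) + t n :=
      Finset.sum_range_succ t n
    have e3 : t n ≤ S/16 := hbd (n+1) (Nat.le_add_left 1 n)
    have h2 : ∑ m ∈ range n, t (m+1) ≤ (∑ m ∈ range n, t m) + S/16 := by
      linarith [ht0 0]
    have h3 : ∑ m ∈ range n, v m ≤ S := Summable.sum_le_tsum _ (fun m _ => hv0 m) hVsummable
    linarith
  have htsummable : Summable t := summable_of_sum_range_le ht0 hPbound
  have htsum : ∑' m, t m ≤ S := Summable.tsum_le_of_sum_range_le htsummable hPbound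
  refine ⟨A, η', heq, htsummable, ?_⟩
  have hv0' : 3 * v 0 = 9 * (η 2 - 5 * η 1)^2 := by
    show 3 * ((3:ℝ)^(0+1) * (η (1+1) - 5 * η 1)^2) = 9 * (η 2 - 5 * η 1)^2
    ring
  calc ∑' m, t m ≤ S := htsum
    _ ≤ 3 * v 0 + 2 * E := hSle
    _ = 9 * (η 2 - 5 * η 1)^2 + 2 * E := by rw [hv0']

lemma my_rev (η : ℕ → ℝ) (A : ℝ) (η' : ℕ → ℝ)
    (h : ∀ m : ℕ, 1 ≤ m → η m = (5:ℝ)^m * A + η' m)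
    (hs : Summable (fun m : ℕ => (3:ℝ)^(m+1) * (η' (m+1))^2)) :
    Summable (fun m : ℕ =>
      (3:ℝ)^(m+1) * (3 * η (m+3) - 16 * η (m+2) + 5 * η (m+1))^2) := by
  have hb1 : Summable (fun m : ℕ => (3:ℝ)^(m+2) * (η' (m+2))^2) := by
    have h1 := (summable_nat_add_iff 1).2 hs
    exact h1
  have hb2 : Summable (fun m : ℕ => (3:ℝ)^(m+3) * (η' (m+3))^2) := by
    have h1 := (summable_nat_add_iff 2).2 hs
    exact h1
  have hg : Summable (fun m : ℕ =>
      3 * ((3:ℝ)^(m+3) * (η' (m+3))^2) + 256 * ((3:ℝ)^(m+2) * (η' (m+2))^2) +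
        75 * ((3:ℝ)^(m+1) * (η' (m+1))^2)) :=
    ((hb2.mul_left 3).add (hb1.mul_left 256)).add (hs.mul_left 75)
  have hε : ∀ m : ℕ, 3 * η (m+3) - 16 * η (m+2) + 5 * η (m+1) =
      3 * η' (m+3) - 16 * η' (m+2) + 5 * η' (m+1) := by
    intro m
    rw [h (m+3) (by omega), h (m+2) (by omega), h (m+1) (by omega)]
    ring
  refine Summable.of_nonneg_of_le (fun m => mul_nonneg (by positivity) (sq_nonneg _))
    (fun m => ?_) hg
  rw [hε m]
  have e3 : (3:ℝ)^(m+3) = (3:ℝ)^(m+1) * 9 := by ring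
  have e2 : (3:ℝ)^(m+2) = (3:ℝ)^(m+1) * 3 := by ring
  rw [e3, e2]
  have hp : (0:ℝ) < (3:ℝ)^(m+1) := by positivity
  generalize η' (m+3) = a
  generalize η' (m+2) = b
  generalize η' (m+1) = cc
  generalize hpp : ((3:ℝ)^(m+1)) = p at hp ⊢
  nlinarith [mul_nonneg hp.le (sq_nonneg (3*a + 16*b)),
    mul_nonneg hp.le (sq_nonneg (16*b + 5*cc)),
    mul_nonneg hp.le (sq_nonneg (3*a - 5*cc))]


/-- Σ 3^m (3η_{m+2} - 16η_{m+1} + 5η_m)^2 < ∞ iff η_m = 5^m A + η'_m with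
Σ 3^m (η'_m)^2 < ∞, with an explicit bound involving (η_2 - 5η_1)^2. -/
theorem stmt6 :
    ∃ C₁ C₂ : ℝ, ∀ η : ℕ → ℝ,
      ((Summable (fun m : ℕ =>
          (3:ℝ)^(m+1) * (3 * η (m+3) - 16 * η (m+2) + 5 * η (m+1))^2) ↔
        ∃ (A : ℝ) (η' : ℕ → ℝ),
          (∀ m : ℕ, 1 ≤ m → η m = (5:ℝ)^m * A + η' m) ∧
          Summable (fun m : ℕ => (3:ℝ)^(m+1) * (η' (m+1))^2)) ∧
      (Summable (fun m : ℕ =>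
          (3:ℝ)^(m+1) * (3 * η (m+3) - 16 * η (m+2) + 5 * η (m+1))^2) →
        ∃ (A : ℝ) (η' : ℕ → ℝ),
          (∀ m : ℕ, 1 ≤ m → η m = (5:ℝ)^m * A + η' m) ∧
          Summable (fun m : ℕ => (3:ℝ)^(m+1) * (η' (m+1))^2) ∧
          (∑' m : ℕ, (3:ℝ)^(m+1) * (η' (m+1))^2) ≤
            C₁ * (η 2 - 5 * η 1)^2 +
            C₂ * ∑' m : ℕ,
              (3:ℝ)^(m+1) * (3 * η (m+3) - 16 * η (m+2) + 5 * η (m+1))^2)) := by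
  refine ⟨9, 2, fun η => ⟨⟨fun hsum => ?_, fun hex => ?_⟩, fun hsum => my_key η hsum⟩⟩
  · obtain ⟨A, η', h1, h2, _⟩ := my_key η hsum
    exact ⟨A, η', h1, h2⟩
  · obtain ⟨A, η', h1, h2⟩ := hex
    exact my_rev η A η' h1 h2
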